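/- Let A be a Banach *-algebra with proper involution and let α be the 2×2 upper-triangular matrix over A with diagonal entries a, c and (1,2)-entry b, where a and c are generalized right group invertible. If (1 − a a_r^⑥)b = 0 and b(1 − c c_r^⑥) = 0, then α is generalized right group invertible in M₂(A), and α_r^⑥ is the matrix with first row (a_r^⑥, −a_r^⑥ b c_r^⑥) and second row (0, c_r^⑥). -/

import Mathlib

open Filter Topology

attribute [local instance] Matrix.linftyOpNormedRing Matrix.linftyOpNormedAlgebra

/-- `x` is a generalized right group inverse of `a`. -/
def IsGRGInv {R : Type*} [NormedRing R] [StarRing R] (a x : R) : Prop :=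
  x = a * x ^ 2 ∧ star (star a * a ^ 2 * x) = star a * a ^ 2 * x ∧
    Tendsto (fun n : ℕ => ‖a ^ n - a * x * a ^ n‖ ^ (1 / (n : ℝ))) atTop (𝓝 0)

private def Saux {A : Type*} [Ring A] (a b c : A) : ℕ → A
  | 0 => 0
  | n+1 => a ^ n * b + Saux a b c n * c

private def Taux {A : Type*} [Ring A] (x b c : A) (n : ℕ) : A :=
  ∑ j ∈ Finset.range n, x ^ j * b * c ^ j

private lemma crit_of_tendsto {u : ℕ → ℝ} (hu0 : ∀ n, 0 ≤ u n)
    (hu : Tendsto (fun n : ℕ => u n ^ (1 / (n : ℝ))) atTop (𝓝 0)) :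
    ∀ ε > (0:ℝ), ∀ᶠ n in atTop, u n ≤ ε ^ n := by
  intro ε hε
  filter_upwards [hu.eventually_lt_const hε, eventually_ge_atTop 1] with n hn hn1
  have hne : n ≠ 0 := by omega
  have h2 := pow_le_pow_left₀ (Real.rpow_nonneg (hu0 n) _) hn.le n
  rwa [one_div, Real.rpow_inv_natCast_pow (hu0 n) hne] at h2

private lemma tendsto_of_crit {u : ℕ → ℝ} (hu0 : ∀ n, 0 ≤ u n)
    (h : ∀ ε > (0:ℝ), ∀ᶠ n in atTop, u n ≤ ε ^ n) :
    Tendsto (fun n : ℕ => u n ^ (1 / (n : ℝ))) atTop (𝓝 0) := by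
  rw [Metric.tendsto_atTop]
  simp only [one_div]
  intro ε hε
  obtain ⟨N, hN⟩ := eventually_atTop.mp (h (ε/2) (by positivity))
  refine ⟨max N 1, fun n hn => ?_⟩
  have hn1 : 1 ≤ n := le_trans (le_max_right N 1) hn
  have hne : n ≠ 0 := by omega
  have hb : u n ^ ((n:ℝ))⁻¹ ≤ ((ε/2)^n) ^ ((n:ℝ))⁻¹ :=
    Real.rpow_le_rpow (hu0 n) (hN n (le_trans (le_max_left N 1) hn)) (by positivity)
  rw [Real.pow_rpow_inv_natCast (by positivity) hne] at hb
  have hnn : 0 ≤ u n ^ ((n:ℝ))⁻¹ := Real.rpow_nonneg (hu0 n) _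
  rw [dist_zero_right, Real.norm_eq_abs, abs_of_nonneg hnn]
  calc u n ^ ((n:ℝ))⁻¹ ≤ ε/2 := hb
    _ < ε := by linarith

private lemma norm2 {A : Type*} [NormedRing A] (M : Matrix (Fin 2) (Fin 2) A) :
    ‖M‖ ≤ ‖M 0 0‖ + ‖M 0 1‖ + ‖M 1 0‖ + ‖M 1 1‖ := by
  have h : ‖M‖₊ ≤ ‖M 0 0‖₊ + ‖M 0 1‖₊ + ‖M 1 0‖₊ + ‖M 1 1‖₊ := by
    rw [Matrix.linfty_opNNNorm_def]
    refine Finset.sup_le fun i _ => ?_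
    fin_cases i
    · rw [Fin.sum_univ_two]
      exact le_add_right (le_add_right le_rfl)
    · rw [Fin.sum_univ_two]
      calc ‖M 1 0‖₊ + ‖M 1 1‖₊ ≤ (‖M 0 0‖₊ + ‖M 0 1‖₊) + (‖M 1 0‖₊ + ‖M 1 1‖₊) := le_add_self
        _ = _ := by ring
  exact_mod_cast h

private lemma norm2' {A : Type*} [NormedRing A] (p q r s : A) :
    ‖(Matrix.of ![![p, q], ![r, s]] : Matrix (Fin 2) (Fin 2) A)‖ ≤ ‖p‖ + ‖q‖ + ‖r‖ + ‖s‖ := by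
  simpa using norm2 (Matrix.of ![![p, q], ![r, s]] : Matrix (Fin 2) (Fin 2) A)

section Alg
variable {A : Type*} [Ring A] (a b c x z : A)

private lemma hax (hx1 : x = a * x ^ 2) (hb : a * x * b = b) :
    ∀ j : ℕ, a * (x ^ (j+1) * b) = x ^ j * b := by
  intro j
  induction j with
  | zero => simpa [pow_one, mul_assoc] using hb
  | succ j ih =>
    have h : x ^ (j+2) = x ^ 2 * x ^ j := by rw [show j+2 = 2+j from by omega, pow_add]
    calc a * (x ^ (j+2) * b) = a * x ^ 2 * (x ^ j * b) := by rw [h, mul_assoc, ← mul_assoc]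
      _ = x * (x ^ j * b) := by rw [← hx1]
      _ = x ^ (j+1) * b := by rw [pow_succ', mul_assoc]

private lemma hS (hx1 : x = a * x ^ 2) (hb : a * x * b = b) :
    ∀ m : ℕ, Saux a b c (m+1) = a ^ m * Taux x b c (m+1) := by
  intro m
  induction m with
  | zero => simp [Saux, Taux]
  | succ m ih =>
    have hsplit : Taux x b c (m+2) = (∑ j ∈ Finset.range (m+1), x ^ (j+1) * b * c ^ (j+1)) + b := by
      rw [Taux, Finset.sum_range_succ']
      simp
    have lhs : Saux a b c (m+2) = a^(m+1)*b + ∑ j ∈ Finset.range (m+1), a^m * (x^j*b*c^j*c) := by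
      show a^(m+1)*b + Saux a b c (m+1) * c = _
      rw [ih, mul_assoc, Taux, Finset.sum_mul, Finset.mul_sum]
    have rhs : a^(m+1) * Taux x b c (m+2)
        = a^(m+1)*b + ∑ j ∈ Finset.range (m+1), a^(m+1)*(x^(j+1)*b*c^(j+1)) := by
      rw [hsplit, mul_add, Finset.mul_sum, add_comm]
    rw [lhs, rhs]
    congr 1
    refine Finset.sum_congr rfl fun j _ => ?_
    rw [← hax a b x hx1 hb j]
    simp only [pow_succ, mul_assoc]

end Alg

section Key
variable {A : Type*} [Ring A] [StarRing A] (a b x : A)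

private lemma key2 (hx1 : x = a * x ^ 2)
    (hx2 : star (star a * a ^ 2 * x) = star a * a ^ 2 * x)
    (hb : a * x * b = b) : star (a - a ^ 2 * x) * b = 0 := by
  have hs : star x * star (a ^ 2) * a = star a * a ^ 2 * x := by
    calc star x * star (a ^ 2) * a = star (star a * a ^ 2 * x) := by
          simp [star_mul, star_star, mul_assoc]
      _ = _ := hx2
  have h0 : (1 - a * x) * x = 0 := by
    have h : a * x ^ 2 = a * x * x := by rw [pow_two, mul_assoc]
    rw [sub_mul, one_mul, ← h, ← hx1, sub_self]
  have e2 : star (a - a ^ 2 * x) * a = star a * a - star a * a ^ 2 * x := by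
    rw [star_sub, sub_mul, star_mul, hs]
  have e3 : star a * a - star a * a ^ 2 * x = star a * a * (1 - a * x) := by noncomm_ring
  calc star (a - a ^ 2 * x) * b = star (a - a ^ 2 * x) * (a * (x * b)) := by
        conv_lhs => rw [← hb]
        rw [mul_assoc]
    _ = (star (a - a ^ 2 * x) * a) * (x * b) := by rw [mul_assoc]
    _ = (star a * a * (1 - a * x)) * (x * b) := by rw [e2, e3]
    _ = star a * a * (((1 - a * x) * x) * b) := by rw [mul_assoc, ← mul_assoc (1 - a*x) x b]
    _ = 0 := by rw [h0, zero_mul, mul_zero]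

end Key

section Mat
variable {A : Type*} [NormedRing A] [StarRing A] (a b c x z : A)

private lemma cond1 (hx1 : x = a * x ^ 2) (hz1 : z = c * z ^ 2)
    (hb : a * x * b = b) (hbc : b * (c * z) = b) :
    (Matrix.of ![![x, -(x * b * z)], ![0, z]] : Matrix (Fin 2) (Fin 2) A) =
      Matrix.of ![![a, b], ![0, c]] * Matrix.of ![![x, -(x * b * z)], ![0, z]] ^ 2 := by
  ext i j
  fin_cases i <;> fin_cases j <;>
    simp [pow_two, Matrix.mul_apply, Fin.sum_univ_two]
  · rw [← pow_two]; exact hx1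
  · have e1 : a * (x*(x*b*z)) = x*b*z := by
      have h : a * (x*(x*b*z)) = a * x^2 * (b*z) := by rw [pow_two]; noncomm_ring
      rw [h, ← hx1]; noncomm_ring
    have e2 : a * (x*b*z*z) = b*(z*z) := by
      have h : a * (x*b*z*z) = (a*x*b)*(z*z) := by noncomm_ring
      rw [h, hb]
    rw [mul_add, mul_neg, mul_neg, e1, e2]
    noncomm_ring
  · rw [← pow_two]; exact hz1

private lemma prodab (hb : a * x * b = b) :
    (Matrix.of ![![a, b], ![0, c]] * Matrix.of ![![x, -(x * b * z)], ![0, z]]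
       : Matrix (Fin 2) (Fin 2) A) = Matrix.of ![![a * x, 0], ![0, c * z]] := by
  ext i j
  fin_cases i <;> fin_cases j <;>
    simp [Matrix.mul_apply, Fin.sum_univ_two]
  have h : a * (x*b*z) = (a*x*b)*z := by noncomm_ring
  rw [h, hb]
  abel

private lemma hpow : ∀ n : ℕ, (Matrix.of ![![a, b], ![0, c]] : Matrix (Fin 2) (Fin 2) A) ^ n =
    Matrix.of ![![a ^ n, Saux a b c n], ![0, c ^ n]] := by
  intro n
  induction n with
  | zero =>
    ext i j
    fin_cases i <;> fin_cases j <;> simp [Saux, Matrix.one_apply]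
  | succ n ih =>
    rw [pow_succ, ih]
    ext i j
    fin_cases i <;> fin_cases j <;>
      simp [Saux, Matrix.mul_apply, Fin.sum_univ_two, pow_succ]

private lemma prodM (hb : a * x * b = b) (hbc : b * (c * z) = b) :
    star (Matrix.of ![![a, b], ![0, c]] : Matrix (Fin 2) (Fin 2) A) *
        Matrix.of ![![a, b], ![0, c]] ^ 2 * Matrix.of ![![x, -(x * b * z)], ![0, z]] =
      Matrix.of ![![star a * (a * a * x), star a * b],
        ![star b * (a * a * x), star b * b + star c * (c * c * z)]] := by
  have e1 : ∀ w : A, -(w * (a*a) * (x*b*z)) + w * (a*b+b*c) * z = w * b := by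
    intro w
    have h1 : w * (a*a) * (x*b*z) = w * (a * ((a*x*b)*z)) := by noncomm_ring
    have h2 : w * (a*b+b*c) * z = w * (a*(b*z)) + w * (b*(c*z)) := by noncomm_ring
    rw [h1, h2, hb, hbc]
    abel
  have hb2 : a * (x * (b * z)) = b * z := by
    have h : a * (x * (b * z)) = (a * x * b) * z := by noncomm_ring
    rw [h, hb]
  ext i j
  fin_cases i <;> fin_cases j <;>
    simp [pow_two, Matrix.mul_apply, Matrix.star_apply, Fin.sum_univ_two]
  · noncomm_ring
  · exact e1 (star a)
  · noncomm_ring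
  · rw [add_mul, ← add_assoc]
    congr 1
    · exact e1 (star b)
    · noncomm_ring

private lemma cond2 (hx2 : star (star a * a ^ 2 * x) = star a * a ^ 2 * x)
    (hz2 : star (star c * c ^ 2 * z) = star c * c ^ 2 * z)
    (k2 : star (a - a ^ 2 * x) * b = 0) (hb : a * x * b = b) (hbc : b * (c * z) = b) :
    star (star (Matrix.of ![![a, b], ![0, c]] : Matrix (Fin 2) (Fin 2) A) *
        Matrix.of ![![a, b], ![0, c]] ^ 2 * Matrix.of ![![x, -(x * b * z)], ![0, z]]) =
      star (Matrix.of ![![a, b], ![0, c]] : Matrix (Fin 2) (Fin 2) A) *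
        Matrix.of ![![a, b], ![0, c]] ^ 2 * Matrix.of ![![x, -(x * b * z)], ![0, z]] := by
  rw [prodM a b c x z hb hbc]
  have k2a : star (a ^ 2 * x) * b = star a * b := by
    have h := k2
    rw [star_sub, sub_mul, sub_eq_zero] at h
    exact h.symm
  have k2b : star b * (a ^ 2 * x) = star b * a := by
    have h := congrArg star k2
    rw [star_mul, star_star, star_zero, mul_sub, sub_eq_zero] at h
    exact h.symm
  ext i j
  fin_cases i <;> fin_cases j <;> simp [Matrix.star_apply, star_mul, star_star]
  · calc star x * (star a * star a) * a = star (star a * a ^ 2 * x) := by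
          simp [star_mul, star_star, pow_two, mul_assoc]
      _ = star a * a ^ 2 * x := hx2
      _ = star a * (a * a * x) := by rw [pow_two]; noncomm_ring
  · calc star x * (star a * star a) * b = star (a ^ 2 * x) * b := by
          congr 1
          simp [star_mul, pow_two, mul_assoc]
      _ = star a * b := k2a
  · rw [show a * a * x = a ^ 2 * x from by rw [pow_two]]
    exact k2b.symm
  · calc star z * (star c * star c) * c = star (star c * c ^ 2 * z) := by
          simp [star_mul, star_star, pow_two, mul_assoc]
      _ = star c * c ^ 2 * z := hz2
      _ = star c * (c * c * z) := by rw [pow_two]; noncomm_ring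

private lemma hDmat (hx1 : x = a * x ^ 2) (hb : a * x * b = b) : ∀ m : ℕ,
    (Matrix.of ![![a, b], ![0, c]] : Matrix (Fin 2) (Fin 2) A) ^ (m+1) -
      Matrix.of ![![a, b], ![0, c]] * Matrix.of ![![x, -(x * b * z)], ![0, z]] *
        Matrix.of ![![a, b], ![0, c]] ^ (m+1) =
    Matrix.of ![![a^(m+1) - a*x*a^(m+1), (a^m - a*x*a^m) * Taux x b c (m+1)],
      ![0, c^(m+1) - c*z*c^(m+1)]] := by
  intro m
  rw [prodab a b c x z hb, hpow a b c]
  ext i j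
  fin_cases i <;> fin_cases j <;>
    simp [Matrix.mul_apply, Matrix.sub_apply, Fin.sum_univ_two]
  · rw [hS a b c x hx1 hb m, sub_mul]
    simp [mul_assoc]

private lemma Tbound (m : ℕ) : ‖Taux x b c (m+1)‖ ≤
    ((m:ℝ)+1) * ‖b‖ * (max 1 (‖x‖ * ‖c‖))^m := by
  set K := max 1 (‖x‖ * ‖c‖) with hK
  have hK1 : (1:ℝ) ≤ K := le_max_left _ _
  have hxc : ‖x‖ * ‖c‖ ≤ K := le_max_right _ _
  have hterm : ∀ j : ℕ, ‖x^j * b * c^j‖ ≤ ‖b‖ * (‖x‖*‖c‖)^j := by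
    intro j
    match j with
    | 0 => simp
    | j+1 =>
      have h1 : ‖x^(j+1) * b * c^(j+1)‖ ≤ ‖x^(j+1)‖ * ‖b‖ * ‖c^(j+1)‖ :=
        le_trans (norm_mul_le _ _) (mul_le_mul_of_nonneg_right (norm_mul_le _ _) (norm_nonneg _))
      have h2 : ‖x^(j+1)‖ ≤ ‖x‖^(j+1) := norm_pow_le' x (Nat.succ_pos j)
      have h3 : ‖c^(j+1)‖ ≤ ‖c‖^(j+1) := norm_pow_le' c (Nat.succ_pos j)
      calc ‖x^(j+1) * b * c^(j+1)‖ ≤ ‖x‖^(j+1) * ‖b‖ * ‖c‖^(j+1) := by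
            refine le_trans h1 (mul_le_mul (mul_le_mul h2 le_rfl (norm_nonneg b) (by positivity))
              h3 (norm_nonneg _) (by positivity))
        _ = ‖b‖ * (‖x‖*‖c‖)^(j+1) := by rw [mul_pow]; ring
  calc ‖Taux x b c (m+1)‖ ≤ ∑ j ∈ Finset.range (m+1), ‖x^j * b * c^j‖ := norm_sum_le _ _
    _ ≤ ∑ _j ∈ Finset.range (m+1), ‖b‖ * K^m := by
        refine Finset.sum_le_sum fun j hj => ?_
        refine le_trans (hterm j) (mul_le_mul_of_nonneg_left ?_ (norm_nonneg b))
        calc (‖x‖*‖c‖)^j ≤ K^j := pow_le_pow_left₀ (by positivity) hxc j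
          _ ≤ K^m := pow_le_pow_right₀ hK1 (by
              have := Finset.mem_range.mp hj; omega)
    _ = ((m:ℝ)+1) * (‖b‖ * K^m) := by
        rw [Finset.sum_const, Finset.card_range, nsmul_eq_mul]
        push_cast
        ring
    _ = ((m:ℝ)+1) * ‖b‖ * K^m := by ring

end Mat

/-- If `a`, `c` are generalized right group invertible with inverses
`x`, `z`, and (1 − ax)b = 0, b(1 − cz) = 0, then the upper triangular matrix
![![a, b], ![0, c]] is generalized right group invertible with inverse
![![x, −x b z], ![0, z]]. -/
theorem grg_triangular_matrix
    {A : Type*} [NormedRing A] [StarRing A] [NormedAlgebra ℂ A] [CompleteSpace A]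
    (hproper : ∀ x : A, star x * x = 0 → x = 0)
    (a b c x z : A) (hx : IsGRGInv a x) (hz : IsGRGInv c z)
    (h1 : (1 - a * x) * b = 0) (h2 : b * (1 - c * z) = 0) :
    IsGRGInv (Matrix.of ![![a, b], ![0, c]]) (Matrix.of ![![x, -(x * b * z)], ![0, z]]) := by
  obtain ⟨hx1, hx2, hx3⟩ := hx
  obtain ⟨hz1, hz2, hz3⟩ := hz
  have hb : a * x * b = b := by
    have h : b - a * x * b = 0 := by rw [← h1]; noncomm_ring
    rw [sub_eq_zero] at h
    exact h.symm
  have hbc : b * (c * z) = b := by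
    have h : b - b * (c * z) = 0 := by rw [← h2]; noncomm_ring
    rw [sub_eq_zero] at h
    exact h.symm
  have k2 := key2 a b x hx1 hx2 hb
  refine ⟨cond1 a b c x z hx1 hz1 hb hbc, cond2 a b c x z hx2 hz2 k2 hb hbc, ?_⟩
  apply tendsto_of_crit (fun n => norm_nonneg _)
  intro ε hε
  have hu := crit_of_tendsto (fun n => norm_nonneg _) hx3
  have hv := crit_of_tendsto (fun n => norm_nonneg _) hz3
  set B := ‖b‖ with hB
  set K := max 1 (‖x‖ * ‖c‖) with hK
  have hK1 : (1:ℝ) ≤ K := le_max_left _ _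
  have hK0 : (0:ℝ) < K := lt_of_lt_of_le one_pos hK1
  obtain ⟨N₁, hN₁⟩ := eventually_atTop.mp (hu (ε/4) (by positivity))
  obtain ⟨N₂, hN₂⟩ := eventually_atTop.mp (hv (ε/4) (by positivity))
  obtain ⟨N₃, hN₃⟩ := eventually_atTop.mp (hu (ε/(2*K)) (by positivity))
  have hlim : Tendsto (fun m : ℕ => ((m:ℝ)+1) * B * (1/2)^m) atTop (𝓝 0) := by
    have h1' := tendsto_self_mul_const_pow_of_lt_one (by norm_num : (0:ℝ) ≤ 1/2)
      (by norm_num : (1/2:ℝ) < 1)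
    have h2' := tendsto_pow_atTop_nhds_zero_of_lt_one (by norm_num : (0:ℝ) ≤ 1/2)
      (by norm_num : (1/2:ℝ) < 1)
    have h3' := ((h1'.add h2').const_mul B)
    simp only [add_zero, mul_zero] at h3'
    refine h3'.congr fun m => ?_
    ring
  obtain ⟨N₄, hN₄⟩ := eventually_atTop.mp
    (hlim.eventually_le_const (by positivity : (0:ℝ) < ε/3))
  rw [eventually_atTop]
  refine ⟨N₁ + N₂ + N₃ + N₄ + 1, fun n hn => ?_⟩
  obtain ⟨m, rfl⟩ : ∃ m, n = m + 1 := ⟨n - 1, by omega⟩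
  have hm1 : m + 1 ≥ N₁ := by omega
  have hm2 : m + 1 ≥ N₂ := by omega
  have hm3 : m ≥ N₃ := by omega
  have hm4 : m ≥ N₄ := by omega
  have hεm : (0:ℝ) ≤ ε ^ m := by positivity
  have hεm1 : (0:ℝ) ≤ ε ^ (m+1) := by positivity
  -- the three pieces
  have p1 : ‖a^(m+1) - a*x*a^(m+1)‖ ≤ (1/3) * ε^(m+1) := by
    refine le_trans (hN₁ (m+1) hm1) ?_
    have h4 : ((1:ℝ)/4)^(m+1) ≤ 1/3 := by
      calc ((1:ℝ)/4)^(m+1) ≤ ((1:ℝ)/4)^1 := by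
            refine pow_le_pow_of_le_one (by norm_num) (by norm_num) (by omega)
        _ ≤ 1/3 := by norm_num
    calc (ε/4)^(m+1) = ε^(m+1) * (1/4)^(m+1) := by rw [div_pow, one_div_pow]; ring
      _ ≤ ε^(m+1) * (1/3) := mul_le_mul_of_nonneg_left h4 hεm1
      _ = (1/3) * ε^(m+1) := by ring
  have p3 : ‖c^(m+1) - c*z*c^(m+1)‖ ≤ (1/3) * ε^(m+1) := by
    refine le_trans (hN₂ (m+1) hm2) ?_
    have h4 : ((1:ℝ)/4)^(m+1) ≤ 1/3 := by
      calc ((1:ℝ)/4)^(m+1) ≤ ((1:ℝ)/4)^1 := by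
            refine pow_le_pow_of_le_one (by norm_num) (by norm_num) (by omega)
        _ ≤ 1/3 := by norm_num
    calc (ε/4)^(m+1) = ε^(m+1) * (1/4)^(m+1) := by rw [div_pow, one_div_pow]; ring
      _ ≤ ε^(m+1) * (1/3) := mul_le_mul_of_nonneg_left h4 hεm1
      _ = (1/3) * ε^(m+1) := by ring
  have p2 : ‖(a^m - a*x*a^m) * Taux x b c (m+1)‖ ≤ (1/3) * ε^(m+1) := by
    have hT := Tbound (x := x) (b := b) (c := c) m
    rw [← hK, ← hB] at hT
    have hTnn : (0:ℝ) ≤ ((m:ℝ)+1) * B * K^m := by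
      have : (0:ℝ) ≤ B := norm_nonneg b
      positivity
    calc ‖(a^m - a*x*a^m) * Taux x b c (m+1)‖
        ≤ ‖a^m - a*x*a^m‖ * ‖Taux x b c (m+1)‖ := norm_mul_le _ _
      _ ≤ (ε/(2*K))^m * (((m:ℝ)+1) * B * K^m) := by
          refine mul_le_mul (hN₃ m hm3) hT (norm_nonneg _) (by positivity)
      _ = ((m:ℝ)+1) * B * (1/2)^m * ε^m := by
          have hKne : K ≠ 0 := ne_of_gt hK0
          rw [div_pow, mul_pow, one_div_pow]
          field_simp
      _ ≤ (ε/3) * ε^m := mul_le_mul_of_nonneg_right (hN₄ m hm4) hεm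
      _ = (1/3) * ε^(m+1) := by rw [pow_succ]; ring
  calc ‖(Matrix.of ![![a, b], ![0, c]] : Matrix (Fin 2) (Fin 2) A) ^ (m+1) -
        Matrix.of ![![a, b], ![0, c]] * Matrix.of ![![x, -(x * b * z)], ![0, z]] *
          Matrix.of ![![a, b], ![0, c]] ^ (m+1)‖
      = ‖(Matrix.of ![![a^(m+1) - a*x*a^(m+1), (a^m - a*x*a^m) * Taux x b c (m+1)],
          ![0, c^(m+1) - c*z*c^(m+1)]] : Matrix (Fin 2) (Fin 2) A)‖ := by
        rw [hDmat a b c x z hx1 hb m]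
    _ ≤ ‖a^(m+1) - a*x*a^(m+1)‖ + ‖(a^m - a*x*a^m) * Taux x b c (m+1)‖ +
        ‖(0:A)‖ + ‖c^(m+1) - c*z*c^(m+1)‖ := norm2' _ _ _ _
    _ ≤ (1/3) * ε^(m+1) + (1/3) * ε^(m+1) + 0 + (1/3) * ε^(m+1) := by
        rw [norm_zero]
        gcongr
    _ = ε^(m+1) := by ring
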